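/- Let G be a looped graph with n vertices, m edges and c loops with m + c ≤ 2n. Then the matrix M_{2,0,2}(G) has rank m + c (full row rank over the rational function field) if and only if G is (2,0,2)-graded-sparse. In particular, when m + c = 2n, M_{2,0,2}(G) has rank 2n if and only if G is looped-(2,2). -/

import Mathlib

/-!
STATEMENT 10: the matrix M_{2,0,2}(G) represents the (2,0,2)-graded-sparsity matroid.
Let G be a looped graph with n vertices, m edges and c loops with m + c ≤ 2n.  Then
M_{2,0,2}(G) has rank m + c (full row rank over the rational function field) iff G is
(2,0,2)-graded-sparse.  In particular, when m + c = 2n, M_{2,0,2}(G) has rank 2n iff G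
is looped-(2,2).
-/

open MvPolynomial

/-- A looped graph. -/
structure LGraph (V E L : Type) where
  ends : E → V × V
  ne : ∀ e, (ends e).1 ≠ (ends e).2
  loopAt : L → V

namespace LGraph

variable {V E L : Type}

noncomputable def edgeCount (G : LGraph V E L) (S : Finset V) : ℕ :=
  Nat.card {e : E // (G.ends e).1 ∈ S ∧ (G.ends e).2 ∈ S}

noncomputable def loopCount (G : LGraph V E L) (S : Finset V) : ℕ :=
  Nat.card {l : L // G.loopAt l ∈ S}

/-- `(2,0,2)`-graded-sparsity. -/
def IsGradedSparse202 (G : LGraph V E L) : Prop :=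
  (∀ S : Finset V, G.edgeCount S ≤ 2 * S.card - 2) ∧
  (∀ S : Finset V, G.edgeCount S + G.loopCount S ≤ 2 * S.card)

/-- A looped-(2,2) graph. -/
def IsLooped22 (G : LGraph V E L) [Fintype V] [Fintype E] [Fintype L] : Prop :=
  G.IsGradedSparse202 ∧ Fintype.card E + Fintype.card L = 2 * Fintype.card V

end LGraph

/-- The rational function field `ℝ(a_e, b_e, c_l, d_l)`; `Sum.inl (Sum.inl e)` is `a_e`,
`Sum.inl (Sum.inr e)` is `b_e`, `Sum.inr (Sum.inl l)` is `c_l`, `Sum.inr (Sum.inr l)` is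
`d_l`. -/
abbrev DSField (E L : Type) := FractionRing (MvPolynomial ((E ⊕ E) ⊕ (L ⊕ L)) ℝ)

noncomputable def dsVar (E L : Type) (v : (E ⊕ E) ⊕ (L ⊕ L)) : DSField E L :=
  algebraMap (MvPolynomial ((E ⊕ E) ⊕ (L ⊕ L)) ℝ) (DSField E L) (X v)

/-- The matrix `M_{2,0,2}(G)`: the row of edge `e = ij` has entries `a_e, b_e` in the
two columns of vertex `i`, entries `−a_e, −b_e` in the two columns of vertex `j`, and
zeros elsewhere; the row of loop `l` on vertex `i` has entries `c_l, d_l` in the two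
columns of vertex `i` and zeros elsewhere. -/
noncomputable def M202 {V E L : Type} [DecidableEq V] (G : LGraph V E L) :
    Matrix (E ⊕ L) (V ⊕ V) (DSField E L) := fun row col =>
  match row with
  | Sum.inl e =>
      match col with
      | Sum.inl v =>
          if v = (G.ends e).1 then dsVar E L (Sum.inl (Sum.inl e))
          else if v = (G.ends e).2 then -dsVar E L (Sum.inl (Sum.inl e)) else 0
      | Sum.inr v =>
          if v = (G.ends e).1 then dsVar E L (Sum.inl (Sum.inr e))
          else if v = (G.ends e).2 then -dsVar E L (Sum.inl (Sum.inr e)) else 0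
  | Sum.inr l =>
      match col with
      | Sum.inl v => if v = G.loopAt l then dsVar E L (Sum.inr (Sum.inl l)) else 0
      | Sum.inr v => if v = G.loopAt l then dsVar E L (Sum.inr (Sum.inr l)) else 0


set_option linter.unusedSectionVars false
set_option maxHeartbeats 1000000

namespace M202Aux

section UnionLemma

open Submodule Module

variable {ι : Type} {F : Type} [Field F]


variable {ι : Type} {F : Type} [Field F]

/-- rank of the span of the vectors indexed by a finset -/
noncomputable def rk (F : Type) [Field F] {W : Type} [AddCommGroup W] [Module F W]
    (u : ι → W) (Y : Finset ι) : ℕ :=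
  Module.finrank F (Submodule.span F (u '' (Y : Set ι)))

/-- hand-rolled linear independence of a finite subfamily -/
def myIndep (F : Type) [Field F] {W : Type} [AddCommGroup W] [Module F W]
    (u : ι → W) (s : Finset ι) : Prop :=
  ∀ g : ι → F, ∑ i ∈ s, g i • u i = 0 → ∀ i ∈ s, g i = 0

theorem myIndep_empty {W : Type} [AddCommGroup W] [Module F W] (u : ι → W) :
    myIndep F u ∅ := by
  intro g _ i hi
  exact absurd hi (Finset.notMem_empty i)

theorem rk_insert_zero {W : Type} [AddCommGroup W] [Module F W] [DecidableEq ι]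
    (u : ι → W) {x : ι} (hx : u x = 0) (Y : Finset ι) :
    rk F u (insert x Y) = rk F u Y := by
  unfold rk
  rw [Finset.coe_insert, Set.image_insert_eq, hx, Submodule.span_insert_zero]

theorem rk_singleton_zero {W : Type} [AddCommGroup W] [Module F W]
    (u : ι → W) {x : ι} (hx : u x = 0) : rk F u {x} = 0 := by
  unfold rk
  rw [Finset.coe_singleton, Set.image_singleton, hx, Submodule.span_zero_singleton,
    finrank_bot]

theorem rk_submod {W : Type} [AddCommGroup W] [Module F W] [FiniteDimensional F W]
    [DecidableEq ι] (u : ι → W) (Y Z : Finset ι) :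
    rk F u (Y ∪ Z) + rk F u (Y ∩ Z) ≤ rk F u Y + rk F u Z := by
  unfold rk
  have h1 : Submodule.span F (u '' ((Y ∪ Z : Finset ι) : Set ι)) =
      Submodule.span F (u '' Y) ⊔ Submodule.span F (u '' Z) := by
    rw [Finset.coe_union, Set.image_union, Submodule.span_union]
  have h2 : Submodule.span F (u '' ((Y ∩ Z : Finset ι) : Set ι)) ≤
      Submodule.span F (u '' Y) ⊓ Submodule.span F (u '' Z) := by
    refine le_inf ?_ ?_ <;> refine Submodule.span_mono (Set.image_mono ?_)
    · rw [Finset.coe_inter]; exact Set.inter_subset_left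
    · rw [Finset.coe_inter]; exact Set.inter_subset_right
  have h3 := Submodule.finrank_mono h2
  have h4 := Submodule.finrank_sup_add_finrank_inf_eq
    (Submodule.span F (u '' Y)) (Submodule.span F (u '' Z))
  rw [h1]
  omega

theorem rk_quot {W : Type} [AddCommGroup W] [Module F W] [FiniteDimensional F W]
    [DecidableEq ι] (u : ι → W) {x : ι} (hx : u x ≠ 0) (Y : Finset ι) :
    rk F (fun i => (Submodule.span F {u x}).mkQ (u i)) Y + 1 = rk F u (insert x Y) := by
  set q : Submodule F W := Submodule.span F {u x} with hq
  set p : Submodule F W := Submodule.span F (u '' (Y : Set ι)) with hp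
  have hq1 : finrank F q = 1 := finrank_span_singleton hx
  set s : Submodule F W := p ⊔ q with hs
  have hqs : q ≤ s := le_sup_right
  -- span of quotient image
  have himg : Submodule.span F ((fun i => q.mkQ (u i)) '' (Y : Set ι)) =
      Submodule.map q.mkQ p := by
    rw [hp, Submodule.map_span]
    congr 1
    rw [← Set.image_comp]
    rfl
  have hmapq : Submodule.map q.mkQ q = ⊥ := by
    rw [eq_bot_iff]
    rintro z ⟨y, hy, rfl⟩
    simp only [Submodule.mem_bot, Submodule.mkQ_apply, Submodule.Quotient.mk_eq_zero]
    exact hy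
  have hps : Submodule.map q.mkQ p = Submodule.map q.mkQ s := by
    rw [hs, Submodule.map_sup, hmapq, sup_bot_eq]
  -- rank-nullity on mkQ restricted to s
  have hrn := LinearMap.finrank_range_add_finrank_ker (q.mkQ.comp s.subtype)
  have hrange : LinearMap.range (q.mkQ.comp s.subtype) = Submodule.map q.mkQ s := by
    rw [LinearMap.range_comp, Submodule.range_subtype]
  have hker : LinearMap.ker (q.mkQ.comp s.subtype) = Submodule.comap s.subtype q := by
    rw [LinearMap.ker_comp, Submodule.ker_mkQ]
  have hkerrank : finrank F (LinearMap.ker (q.mkQ.comp s.subtype)) = 1 := by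
    rw [hker, (Submodule.comapSubtypeEquivOfLe hqs).finrank_eq, hq1]
  have hins : Submodule.span F (u '' ((insert x Y : Finset ι) : Set ι)) = s := by
    rw [Finset.coe_insert, Set.image_insert_eq, Submodule.span_insert, hs, ← hq, ← hp,
      sup_comm]
  unfold rk
  rw [himg, hins, hps]
  rw [hrange, hkerrank] at hrn
  exact hrn


theorem myIndep_lift {W : Type} [AddCommGroup W] [Module F W] [DecidableEq ι]
    {u : ι → W} {x : ι} (hx : u x ≠ 0) {A : Finset ι} (hxA : x ∉ A)
    (h : myIndep F (fun i => (Submodule.span F {u x}).mkQ (u i)) A) :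
    myIndep F u (insert x A) := by
  set q : Submodule F W := Submodule.span F {u x} with hq
  intro g hg i hi
  rw [Finset.sum_insert hxA] at hg
  have hgq : ∑ i ∈ A, g i • q.mkQ (u i) = 0 := by
    have := congrArg q.mkQ hg
    simp only [map_add, map_smul, map_sum, map_zero] at this
    have hx0 : q.mkQ (u x) = 0 := by
      simp only [Submodule.mkQ_apply, Submodule.Quotient.mk_eq_zero]
      exact Submodule.subset_span rfl
    rw [hx0, smul_zero, zero_add] at this
    exact this
  have hA : ∀ j ∈ A, g j = 0 := h g hgq
  have hsumA : ∑ i ∈ A, g i • u i = 0 :=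
    Finset.sum_eq_zero fun j hj => by rw [hA j hj, zero_smul]
  rw [hsumA, add_zero] at hg
  have hgx : g x = 0 := by
    rcases smul_eq_zero.mp hg with h' | h'
    · exact h'
    · exact absurd h' hx
  rcases Finset.mem_insert.mp hi with rfl | hiA
  · exact hgx
  · exact hA i hiA

theorem unionLemma [DecidableEq ι] :
    ∀ (n : ℕ) (W₁ : Type) [AddCommGroup W₁] [Module F W₁] [FiniteDimensional F W₁]
      (W₂ : Type) [AddCommGroup W₂] [Module F W₂] [FiniteDimensional F W₂]
      (u₁ : ι → W₁) (u₂ : ι → W₂) (R : Finset ι), R.card = n →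
      (∀ Y ⊆ R, Y.card ≤ rk F u₁ Y + rk F u₂ Y) →
      ∃ A B : Finset ι, A ∪ B = R ∧ Disjoint A B ∧ myIndep F u₁ A ∧ myIndep F u₂ B := by
  intro n
  induction n with
  | zero =>
    intro W₁ _ _ _ W₂ _ _ _ u₁ u₂ R hcard _
    rw [Finset.card_eq_zero] at hcard
    exact ⟨∅, ∅, by simp [hcard], Finset.disjoint_empty_left ∅, myIndep_empty u₁,
      myIndep_empty u₂⟩
  | succ n IH =>
    intro W₁ _ _ _ W₂ _ _ _ u₁ u₂ R hcard hcond
    have hR : R.Nonempty := by rw [← Finset.card_pos, hcard]; omega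
    obtain ⟨x, hxR⟩ := hR
    set R' := R.erase x with hR'
    have hxR' : x ∉ R' := Finset.notMem_erase x R
    have hcard' : R'.card = n := by
      rw [hR', Finset.card_erase_of_mem hxR, hcard]; omega
    have hsubR : R' ⊆ R := Finset.erase_subset x R
    by_cases h1 : u₁ x ≠ 0 ∧ ∀ Y ⊆ R',
        Y.card ≤ rk F (fun i => (Submodule.span F {u₁ x}).mkQ (u₁ i)) Y + rk F u₂ Y
    · obtain ⟨hx1, hcond1⟩ := h1
      obtain ⟨A, B, hAB, hdisj, hA, hB⟩ :=
        IH (W₁ ⧸ Submodule.span F {u₁ x}) W₂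
          (fun i => (Submodule.span F {u₁ x}).mkQ (u₁ i)) u₂ R' hcard' hcond1
      have hBR' : B ⊆ R' := hAB ▸ Finset.subset_union_right
      have hAR' : A ⊆ R' := hAB ▸ Finset.subset_union_left
      refine ⟨insert x A, B, ?_, ?_, ?_, hB⟩
      · rw [Finset.insert_union, hAB, hR', Finset.insert_erase hxR]
      · rw [Finset.disjoint_insert_left]
        exact ⟨fun hxB => hxR' (hBR' hxB), hdisj⟩
      · exact myIndep_lift hx1 (fun hxA => hxR' (hAR' hxA)) hA
    · by_cases h2 : u₂ x ≠ 0 ∧ ∀ Y ⊆ R',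
          Y.card ≤ rk F u₁ Y + rk F (fun i => (Submodule.span F {u₂ x}).mkQ (u₂ i)) Y
      · obtain ⟨hx2, hcond2⟩ := h2
        obtain ⟨A, B, hAB, hdisj, hA, hB⟩ :=
          IH W₁ (W₂ ⧸ Submodule.span F {u₂ x}) u₁
            (fun i => (Submodule.span F {u₂ x}).mkQ (u₂ i)) R' hcard' hcond2
        have hBR' : B ⊆ R' := hAB ▸ Finset.subset_union_right
        have hAR' : A ⊆ R' := hAB ▸ Finset.subset_union_left
        refine ⟨A, insert x B, ?_, ?_, hA, ?_⟩
        · rw [Finset.union_insert, hAB, hR', Finset.insert_erase hxR]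
        · rw [Finset.disjoint_insert_right]
          exact ⟨fun hxA => hxR' (hAR' hxA), hdisj⟩
        · exact myIndep_lift hx2 (fun hxB => hxR' (hBR' hxB)) hB
      · exfalso
        by_cases hx1 : u₁ x = 0
        · by_cases hx2 : u₂ x = 0
          · have h := hcond {x} (Finset.singleton_subset_iff.mpr hxR)
            rw [Finset.card_singleton, rk_singleton_zero u₁ hx1,
              rk_singleton_zero u₂ hx2] at h
            omega
          · -- u₁ x = 0, u₂ x ≠ 0, ¬cond2
            have hcond2 : ¬ ∀ Y ⊆ R',
                Y.card ≤ rk F u₁ Y + rk F (fun i => (Submodule.span F {u₂ x}).mkQ (u₂ i)) Y :=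
              fun hc => h2 ⟨hx2, hc⟩
            push_neg at hcond2
            obtain ⟨Y3, hY3sub, hY3⟩ := hcond2
            have hxY3 : x ∉ Y3 := fun hxy => hxR' (hY3sub hxy)
            have hq := rk_quot (F := F) u₂ hx2 Y3
            have hins := hcond (insert x Y3)
              (Finset.insert_subset hxR (hY3sub.trans hsubR))
            rw [Finset.card_insert_of_notMem hxY3, rk_insert_zero (F := F) u₁ hx1] at hins
            omega
        · by_cases hx2 : u₂ x = 0
          · have hcond1 : ¬ ∀ Y ⊆ R',
                Y.card ≤ rk F (fun i => (Submodule.span F {u₁ x}).mkQ (u₁ i)) Y + rk F u₂ Y :=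
              fun hc => h1 ⟨hx1, hc⟩
            push_neg at hcond1
            obtain ⟨Y2, hY2sub, hY2⟩ := hcond1
            have hxY2 : x ∉ Y2 := fun hxy => hxR' (hY2sub hxy)
            have hq := rk_quot (F := F) u₁ hx1 Y2
            have hins := hcond (insert x Y2)
              (Finset.insert_subset hxR (hY2sub.trans hsubR))
            rw [Finset.card_insert_of_notMem hxY2, rk_insert_zero (F := F) u₂ hx2] at hins
            omega
          · -- both nonzero, both conds fail
            have hcond1 : ¬ ∀ Y ⊆ R',
                Y.card ≤ rk F (fun i => (Submodule.span F {u₁ x}).mkQ (u₁ i)) Y + rk F u₂ Y :=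
              fun hc => h1 ⟨hx1, hc⟩
            have hcond2 : ¬ ∀ Y ⊆ R',
                Y.card ≤ rk F u₁ Y + rk F (fun i => (Submodule.span F {u₂ x}).mkQ (u₂ i)) Y :=
              fun hc => h2 ⟨hx2, hc⟩
            push_neg at hcond1 hcond2
            obtain ⟨Y2, hY2sub, hY2⟩ := hcond1
            obtain ⟨Y3, hY3sub, hY3⟩ := hcond2
            have hxY2 : x ∉ Y2 := fun hxy => hxR' (hY2sub hxy)
            have hxY3 : x ∉ Y3 := fun hxy => hxR' (hY3sub hxy)
            have hq2 := rk_quot (F := F) u₁ hx1 Y2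
            have hq3 := rk_quot (F := F) u₂ hx2 Y3
            -- key inequalities
            have key2 : rk F u₁ (insert x Y2) + rk F u₂ Y2 ≤ Y2.card := by omega
            have key3 : rk F u₁ Y3 + rk F u₂ (insert x Y3) ≤ Y3.card := by omega
            have hZ1 := hcond (insert x (Y2 ∪ Y3))
              (Finset.insert_subset hxR ((Finset.union_subset hY2sub hY3sub).trans hsubR))
            have hZ2 := hcond (Y2 ∩ Y3)
              ((Finset.inter_subset_left.trans hY2sub).trans hsubR)
            have sub1 := rk_submod (F := F) u₁ (insert x Y2) Y3
            have sub2 := rk_submod (F := F) u₂ Y2 (insert x Y3)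
            rw [Finset.insert_union, Finset.insert_inter_of_notMem hxY3] at sub1
            rw [Finset.union_insert, Finset.inter_insert_of_notMem hxY2] at sub2
            have hcZ1 : (insert x (Y2 ∪ Y3)).card = (Y2 ∪ Y3).card + 1 :=
              Finset.card_insert_of_notMem (by
                simp only [Finset.mem_union]; rintro (h | h) <;> [exact hxY2 h; exact hxY3 h])
            have hcui := Finset.card_union_add_card_inter Y2 Y3
            omega


end UnionLemma

section DetTransfer


open Submodule Module Matrix

variable {F : Type} [Field F] {m n : Type} [Fintype m] [Fintype n] [DecidableEq m]
  [DecidableEq n]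

/-- a matrix with independent rows has an invertible square submatrix -/
theorem exists_det_submatrix (M : Matrix m n F) (h : LinearIndependent F (fun i => M i)) :
    ∃ g : m → n, (M.submatrix id g).det ≠ 0 := by
  classical
  have hrank : M.rank = Fintype.card m := h.rank_matrix
  have hrankT : Mᵀ.rank = Fintype.card m := by rw [Matrix.rank_transpose]; exact hrank
  rw [Matrix.rank_eq_finrank_span_row] at hrankT
  have htop : Submodule.span F (Set.range Mᵀ) = ⊤ := by
    apply Submodule.eq_top_of_finrank_eq
    rw [Module.finrank_pi]; exact hrankT
  obtain ⟨b, hbsub, hbspan, hbind⟩ := exists_linearIndependent F (Set.range Mᵀ)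
  rw [htop] at hbspan
  have hbfin : b.Finite := Set.Finite.subset (Set.finite_range _) hbsub
  letI : Fintype b := hbfin.fintype
  have hbcard : Fintype.card m = Fintype.card b := by
    have h1 : finrank F (Submodule.span F (Set.range ((↑) : b → (m → F))))
        = Fintype.card b := finrank_span_eq_card hbind
    rw [Subtype.range_coe, hbspan, finrank_top, Module.finrank_pi] at h1
    omega
  have hex : ∀ x : b, ∃ j : n, Mᵀ j = ↑x := fun x => hbsub x.2
  choose f hf using hex
  have e : m ≃ b := Fintype.equivOfCardEq hbcard
  refine ⟨fun i => f (e i), ?_⟩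
  intro hdet
  obtain ⟨v, hvne, hvz⟩ := Matrix.exists_mulVec_eq_zero_iff.mpr hdet
  have hind2 : LinearIndependent F (fun j : m => ((e j : b) : m → F)) :=
    hbind.comp (fun j => e j) (fun a b hab => e.injective hab)
  apply hvne
  have hz := Fintype.linearIndependent_iff.mp hind2 v ?_
  · funext j
    exact hz j
  · funext i
    have hmv := congrFun hvz i
    simp only [Matrix.mulVec, dotProduct, Matrix.submatrix_apply, id_eq,
      Pi.zero_apply] at hmv
    rw [Finset.sum_apply, Pi.zero_apply]
    rw [← hmv]
    apply Finset.sum_congr rfl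
    intro j _
    have : ((e j : b) : m → F) i = M i (f (e j)) := by
      rw [← hf (e j)]
      rfl
    rw [Pi.smul_apply, this, smul_eq_mul, mul_comm]

/-- conversely, an invertible square submatrix gives independent rows -/
theorem rows_indep_of_det_submatrix (M : Matrix m n F) (g : m → n)
    (h : (M.submatrix id g).det ≠ 0) : LinearIndependent F (fun i => M i) := by
  classical
  apply Fintype.linearIndependent_iff.mpr
  intro c hc i
  by_contra hne
  apply h
  rw [← Matrix.exists_vecMul_eq_zero_iff]
  refine ⟨c, fun h0 => hne (congrFun h0 i), ?_⟩
  funext j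
  have h2 := congrFun hc (g j)
  simp only [Finset.sum_apply, Pi.smul_apply, smul_eq_mul, Pi.zero_apply] at h2
  show ∑ k : m, c k * M k (g j) = 0
  exact h2


end DetTransfer

section Counting

open Submodule Module

variable {V E L : Type} [Fintype V] [Fintype E] [Fintype L] [DecidableEq V]


open Submodule Module


variable {V E L : Type} [Fintype V] [Fintype E] [Fintype L] [DecidableEq V]

/-- the incidence vectors -/
noncomputable def uvec (G : LGraph V E L) : E ⊕ L → (V → ℝ) := fun r =>
  match r with
  | Sum.inl e => Pi.single (G.ends e).1 1 - Pi.single (G.ends e).2 1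
  | Sum.inr l => Pi.single (G.loopAt l) 1

theorem edgeCount_eq (G : LGraph V E L) (S : Finset V) [DecidableEq E] :
    G.edgeCount S =
      (Finset.univ.filter (fun e : E => (G.ends e).1 ∈ S ∧ (G.ends e).2 ∈ S)).card := by
  classical
  rw [LGraph.edgeCount, Nat.card_eq_fintype_card, Fintype.card_subtype]

theorem loopCount_eq (G : LGraph V E L) (S : Finset V) [DecidableEq L] :
    G.loopCount S = (Finset.univ.filter (fun l : L => G.loopAt l ∈ S)).card := by
  classical
  rw [LGraph.loopCount, Nat.card_eq_fintype_card, Fintype.card_subtype]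

theorem count_le (G : LGraph V E L) (hsp : G.IsGradedSparse202) (Y : Finset (E ⊕ L)) :
    Y.card ≤ 2 * rk ℝ (uvec G) Y := by
  classical
  set U : Submodule ℝ (V → ℝ) := Submodule.span ℝ ((uvec G) '' (Y : Set (E ⊕ L))) with hU
  set δ : Option V → (V → ℝ) := fun o => o.elim 0 (fun v => Pi.single v 1) with hδ
  set st : Setoid (Option V) :=
    ⟨fun a b => δ a - δ b ∈ U, by
      refine ⟨fun a => by simp, fun {a b} h => ?_, fun {a b c} h1 h2 => ?_⟩
      · have := U.neg_mem h
        rwa [neg_sub] at this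
      · have := U.add_mem h1 h2
        rwa [sub_add_sub_cancel] at this⟩ with hst
  letI : Fintype (Quotient st) := Quotient.fintype st
  set q0 : Quotient st := Quotient.mk st none with hq0
  have hrel : ∀ a b : Option V, Quotient.mk st a = Quotient.mk st b ↔ δ a - δ b ∈ U := by
    intro a b
    rw [Quotient.eq]
    rfl
  set S : Quotient st → Finset V :=
    fun q => Finset.univ.filter (fun v => Quotient.mk st (some v) = q) with hS
  set cl : E ⊕ L → Quotient st := fun r =>
    Quotient.mk st (Sum.elim (fun e => some (G.ends e).1) (fun _ => none) r) with hcl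
  -- edges of Y have both endpoints in the class, loops in the class of none
  have hedge : ∀ e : E, Sum.inl e ∈ Y →
      Quotient.mk st (some (G.ends e).1) = Quotient.mk st (some (G.ends e).2) := by
    intro e he
    rw [hrel]
    have : uvec G (Sum.inl e) ∈ U :=
      Submodule.subset_span (Set.mem_image_of_mem _ (by exact_mod_cast he))
    simpa [hδ, uvec] using this
  have hloop : ∀ l : L, Sum.inr l ∈ Y →
      Quotient.mk st (some (G.loopAt l)) = Quotient.mk st none := by
    intro l hl
    rw [hrel]
    have : uvec G (Sum.inr l) ∈ U :=
      Submodule.subset_span (Set.mem_image_of_mem _ (by exact_mod_cast hl))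
    simpa [hδ, uvec] using this
  -- counting of vertices and rows by classes
  have hVcard : Fintype.card V = ∑ q : Quotient st, (S q).card := by
    rw [← Finset.card_univ]
    exact Finset.card_eq_sum_card_fiberwise (fun v _ => Finset.mem_univ _)
  have hYcard : Y.card = ∑ q : Quotient st, (Y.filter (fun r => cl r = q)).card :=
    Finset.card_eq_sum_card_fiberwise (fun r _ => Finset.mem_univ _)
  -- per-class bound
  have hclass : ∀ q : Quotient st, (Y.filter (fun r => cl r = q)).card + 2 ≤
      2 * (S q).card + (if q = q0 then 2 else 0) := by
    intro q
    by_cases hq : q = q0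
    · -- class of none : use the second sparsity count
      subst hq
      rw [if_pos rfl]
      have hsub : Y.filter (fun r => cl r = q0) ⊆
          (Finset.univ.filter
            (fun e : E => (G.ends e).1 ∈ S q0 ∧ (G.ends e).2 ∈ S q0)).disjSum
          (Finset.univ.filter (fun l : L => G.loopAt l ∈ S q0)) := by
        intro r hr
        obtain ⟨hrY, hrcl⟩ := Finset.mem_filter.mp hr
        match r with
        | Sum.inl e =>
          rw [Finset.inl_mem_disjSum, Finset.mem_filter]
          have h1 : Quotient.mk st (some (G.ends e).1) = q0 := by
            rw [hcl] at hrcl; simpa using hrcl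
          have h2 : Quotient.mk st (some (G.ends e).2) = q0 := (hedge e hrY).symm.trans h1
          exact ⟨Finset.mem_univ _, by
            simp only [hS, Finset.mem_filter, Finset.mem_univ, true_and]
            exact ⟨h1, h2⟩⟩
        | Sum.inr l =>
          rw [Finset.inr_mem_disjSum, Finset.mem_filter]
          exact ⟨Finset.mem_univ _, by
            simp only [hS, Finset.mem_filter, Finset.mem_univ, true_and]
            exact hloop l hrY⟩
      have hcard := Finset.card_le_card hsub
      rw [Finset.card_disjSum] at hcard
      have hsp2 := hsp.2 (S q0)
      rw [edgeCount_eq, loopCount_eq] at hsp2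
      omega
    · -- other classes : only edges, use the first sparsity count
      rw [if_neg hq]
      have hSne : (S q).Nonempty := by
        obtain ⟨w, hw⟩ := Quotient.exists_rep q
        cases w with
        | none => exact absurd hw.symm hq
        | some v =>
          exact ⟨v, by simp only [hS, Finset.mem_filter, Finset.mem_univ, true_and]; exact hw⟩
      have hsub : Y.filter (fun r => cl r = q) ⊆
          (Finset.univ.filter
            (fun e : E => (G.ends e).1 ∈ S q ∧ (G.ends e).2 ∈ S q)).disjSum ∅ := by
        intro r hr
        obtain ⟨hrY, hrcl⟩ := Finset.mem_filter.mp hr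
        match r with
        | Sum.inl e =>
          rw [Finset.inl_mem_disjSum, Finset.mem_filter]
          have h1 : Quotient.mk st (some (G.ends e).1) = q := by
            rw [hcl] at hrcl; simpa using hrcl
          have h2 : Quotient.mk st (some (G.ends e).2) = q := (hedge e hrY).symm.trans h1
          exact ⟨Finset.mem_univ _, by
            simp only [hS, Finset.mem_filter, Finset.mem_univ, true_and]
            exact ⟨h1, h2⟩⟩
        | Sum.inr l =>
          rw [hcl] at hrcl
          simp only [Sum.elim_inr] at hrcl
          exact absurd hrcl.symm hq
      have hcard := Finset.card_le_card hsub
      rw [Finset.card_disjSum, Finset.card_empty] at hcard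
      have hsp1 := hsp.1 (S q)
      rw [edgeCount_eq] at hsp1
      have hpos : 1 ≤ (S q).card := Finset.card_pos.mpr hSne
      omega
  -- summing up
  have hsum : Y.card + 2 * Fintype.card (Quotient st) ≤ 2 * Fintype.card V + 2 := by
    have h1 : ∑ q : Quotient st, ((Y.filter (fun r => cl r = q)).card + 2) ≤
        ∑ q : Quotient st, (2 * (S q).card + (if q = q0 then 2 else 0)) :=
      Finset.sum_le_sum fun q _ => hclass q
    have h2 : ∑ q : Quotient st, ((Y.filter (fun r => cl r = q)).card + 2)
        = Y.card + 2 * Fintype.card (Quotient st) := by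
      rw [Finset.sum_add_distrib, ← hYcard, Finset.sum_const, Finset.card_univ,
        smul_eq_mul]
      ring
    have h3 : ∑ q : Quotient st, (2 * (S q).card + (if q = q0 then 2 else 0))
        = 2 * Fintype.card V + 2 := by
      rw [Finset.sum_add_distrib, ← Finset.mul_sum, ← hVcard,
        Finset.sum_ite_eq' Finset.univ q0 (fun _ => 2), if_pos (Finset.mem_univ _)]
    omega
  -- lower bound on the rank via a triangular independent family
  set rep : Quotient st → Option V := fun q => if q = q0 then none else q.out with hrep
  have hrepclass : ∀ q : Quotient st, Quotient.mk st (rep q) = q := by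
    intro q
    by_cases hq : q = q0
    · have h : rep q = none := by rw [hrep]; simp [hq]
      rw [h, hq, hq0]
    · have h : rep q = q.out := by rw [hrep]; simp [hq]
      rw [h]
      exact Quotient.out_eq q
  set fixedset := Finset.univ.filter
    (fun v : V => rep (Quotient.mk st (some v)) = some v) with hfx
  set idx := Finset.univ.filter
    (fun v : V => ¬ (rep (Quotient.mk st (some v)) = some v)) with hidx
  have hsplit : fixedset.card + idx.card = Fintype.card V := by
    rw [hfx, hidx, ← Finset.card_univ]
    exact Finset.card_filter_add_card_filter_not _
  have htpos : 1 ≤ Fintype.card (Quotient st) := Fintype.card_pos_iff.mpr ⟨q0⟩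
  have hfix : fixedset.card ≤ Fintype.card (Quotient st) - 1 := by
    have hle : fixedset.card ≤ (Finset.univ.erase q0).card := by
      apply Finset.card_le_card_of_injOn (fun v => Quotient.mk st (some v))
      · intro v hv
        rw [hfx, Finset.mem_coe, Finset.mem_filter] at hv
        rw [Finset.mem_coe, Finset.mem_erase]
        refine ⟨fun h => ?_, Finset.mem_univ _⟩
        have h2 : rep q0 = some v := by rw [← h]; exact hv.2
        have h3 : rep q0 = none := by rw [hrep]; simp
        rw [h3] at h2
        exact Option.some_ne_none v h2.symm
      · intro a ha b hb h
        rw [hfx, Finset.mem_coe, Finset.mem_filter] at ha hb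
        have h' : Quotient.mk st (some a) = Quotient.mk st (some b) := h
        have : some a = some b := by rw [← ha.2, ← hb.2, h']
        exact Option.some_injective _ this
    rw [Finset.card_erase_of_mem (Finset.mem_univ _), Finset.card_univ] at hle
    exact hle
  set z : V → (V → ℝ) := fun v => Pi.single v 1 - δ (rep (Quotient.mk st (some v))) with hz
  have hzU : ∀ v : V, z v ∈ U := by
    intro v
    have h1 : Quotient.mk st (some v) = Quotient.mk st (rep (Quotient.mk st (some v))) :=
      (hrepclass _).symm
    have h2 := (hrel _ _).mp h1
    rw [hz]
    simpa [hδ] using h2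
  have hz_eval : ∀ v ∈ idx, ∀ w ∈ idx, z v w = if v = w then 1 else 0 := by
    intro v hv w hw
    have hzero : δ (rep (Quotient.mk st (some v))) w = 0 := by
      cases hrw : rep (Quotient.mk st (some v)) with
      | none => simp [hδ]
      | some r =>
        have hr : rep (Quotient.mk st (some r)) = some r := by
          have h1 : Quotient.mk st (some r) = Quotient.mk st (some v) := by
            conv_lhs => rw [← hrw]
            exact hrepclass _
          rw [h1, hrw]
        have hrne : w ≠ r := by
          rintro rfl
          rw [hidx, Finset.mem_filter] at hw
          exact hw.2 hr
        simp [hδ, Pi.single_apply, hrne]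
    rw [hz]
    simp only [Pi.sub_apply, hzero, sub_zero, Pi.single_apply]
    simp [eq_comm]
  have hzind : LinearIndependent ℝ (fun v : ↥idx => z ↑v) := by
    apply Fintype.linearIndependent_iff.mpr
    intro g hg w
    have happ := congrFun hg (↑w : V)
    simp only [Finset.sum_apply, Pi.smul_apply, smul_eq_mul, Pi.zero_apply] at happ
    have hsingle : ∑ v : ↥idx, g v * z ↑v ↑w = g w * z ↑w ↑w := by
      apply Finset.sum_eq_single w
      · intro v _ hvw
        rw [hz_eval ↑v v.2 ↑w w.2, if_neg (fun h => hvw (Subtype.ext h)), mul_zero]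
      · intro h
        exact absurd (Finset.mem_univ w) h
    rw [hsingle, hz_eval ↑w w.2 ↑w w.2, if_pos rfl, mul_one] at happ
    exact happ
  have hcardidx : idx.card ≤ Module.finrank ℝ U := by
    have h1 : Module.finrank ℝ (Submodule.span ℝ (Set.range fun v : ↥idx => z ↑v))
        = idx.card := by
      rw [finrank_span_eq_card hzind, Fintype.card_coe]
    have h2 : Submodule.span ℝ (Set.range fun v : ↥idx => z ↑v) ≤ U := by
      rw [Submodule.span_le]
      rintro _ ⟨v, rfl⟩
      exact hzU ↑v
    rw [← h1]
    exact Submodule.finrank_mono h2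
  have hrkU : rk ℝ (uvec G) Y = Module.finrank ℝ U := by rw [hU]; rfl
  rw [hrkU]
  omega

end Counting

section Main

open Submodule Module MvPolynomial

variable {V E L : Type} [Fintype V] [Fintype E] [Fintype L] [DecidableEq V]

/-- an independent family inside a submodule is bounded by its rank -/
theorem card_le_finrank {ι K W : Type} [Field K] [AddCommGroup W] [Module K W]
    [FiniteDimensional K W] (t : Finset ι) (v : ι → W)
    (hind : LinearIndependent K (fun i : ↥t => v ↑i)) (X : Submodule K W)
    (hmem : ∀ i ∈ t, v i ∈ X) : t.card ≤ Module.finrank K X := by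
  have h1 : Module.finrank K (Submodule.span K (Set.range (fun i : ↥t => v ↑i)))
      = t.card := by
    rw [finrank_span_eq_card hind, Fintype.card_coe]
  rw [← h1]
  apply Submodule.finrank_mono
  rw [Submodule.span_le]
  rintro _ ⟨i, rfl⟩
  exact hmem ↑i i.2

theorem finrank_span_image_le {K W ι : Type} [Field K] [AddCommGroup W] [Module K W]
    [DecidableEq ι] (γ : ι → W) (T : Finset ι) :
    Module.finrank K (Submodule.span K (γ '' (T : Set ι))) ≤ T.card := by
  classical
  have h : (γ '' (T : Set ι)) = Set.range (fun c : ↥T => γ ↑c) := Set.image_eq_range _ _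
  rw [h]
  exact (finrank_range_le_card _).trans (le_of_eq (Fintype.card_coe T))

/-- decomposition of an edge row of `M202` -/
theorem row_edge (G : LGraph V E L) (e : E) :
    M202 G (Sum.inl e) =
      dsVar E L (Sum.inl (Sum.inl e)) • Pi.single (Sum.inl (G.ends e).1) 1
        - dsVar E L (Sum.inl (Sum.inl e)) • Pi.single (Sum.inl (G.ends e).2) 1
        + (dsVar E L (Sum.inl (Sum.inr e)) • Pi.single (Sum.inr (G.ends e).1) 1
        - dsVar E L (Sum.inl (Sum.inr e)) • Pi.single (Sum.inr (G.ends e).2) 1) := by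
  have hne := G.ne e
  funext c
  cases c with
  | inl v =>
    simp only [M202, Pi.add_apply, Pi.sub_apply, Pi.smul_apply, Pi.single_apply,
      smul_eq_mul, Sum.inl.injEq, reduceCtorEq, if_false, mul_zero, mul_ite, mul_one]
    by_cases h1 : v = (G.ends e).1
    · subst h1
      rw [if_pos rfl, if_pos rfl, if_neg hne]
      ring
    · rw [if_neg h1, if_neg h1]
      by_cases h2 : v = (G.ends e).2
      · subst h2
        rw [if_pos rfl, if_pos rfl]
        ring
      · rw [if_neg h2, if_neg h2]
        ring
  | inr v =>
    simp only [M202, Pi.add_apply, Pi.sub_apply, Pi.smul_apply, Pi.single_apply,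
      smul_eq_mul, Sum.inr.injEq, reduceCtorEq, if_false, mul_zero, mul_ite, mul_one]
    by_cases h1 : v = (G.ends e).1
    · subst h1
      rw [if_pos rfl, if_pos rfl, if_neg hne]
      ring
    · rw [if_neg h1, if_neg h1]
      by_cases h2 : v = (G.ends e).2
      · subst h2
        rw [if_pos rfl, if_pos rfl]
        ring
      · rw [if_neg h2, if_neg h2]
        ring

/-- decomposition of a loop row of `M202` -/
theorem row_loop (G : LGraph V E L) (l : L) :
    M202 G (Sum.inr l) =
      dsVar E L (Sum.inr (Sum.inl l)) • Pi.single (Sum.inl (G.loopAt l)) 1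
        + dsVar E L (Sum.inr (Sum.inr l)) • Pi.single (Sum.inr (G.loopAt l)) 1 := by
  funext c
  cases c with
  | inl v =>
    simp only [M202, Pi.add_apply, Pi.smul_apply, Pi.single_apply,
      smul_eq_mul, Sum.inl.injEq, reduceCtorEq, if_false, mul_zero, mul_ite, mul_one]
    by_cases h1 : v = G.loopAt l <;> simp [h1]
  | inr v =>
    simp only [M202, Pi.add_apply, Pi.smul_apply, Pi.single_apply,
      smul_eq_mul, Sum.inr.injEq, reduceCtorEq, if_false, mul_zero, mul_ite, mul_one]
    by_cases h1 : v = G.loopAt l <;> simp [h1]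

theorem indep_of_rank (G : LGraph V E L)
    (h : (M202 G).rank = Fintype.card E + Fintype.card L) :
    LinearIndependent (DSField E L) (fun r : E ⊕ L => M202 G r) := by
  have h2 : (M202 G).rank = Fintype.card (E ⊕ L) := by rw [h, Fintype.card_sum]
  rw [Matrix.rank_eq_finrank_span_row] at h2
  rw [linearIndependent_iff_card_eq_finrank_span]
  exact h2.symm

theorem sparse_of_indep (G : LGraph V E L)
    (hind : LinearIndependent (DSField E L) (fun r : E ⊕ L => M202 G r)) :
    G.IsGradedSparse202 := by
  classical
  constructor
  · -- first count
    intro S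
    rcases S.eq_empty_or_nonempty with rfl | ⟨v0, hv0⟩
    · have h0 : G.edgeCount ∅ = 0 := by
        rw [edgeCount_eq]
        simp
      simp [h0]
    · set γ : V ⊕ V → ((V ⊕ V) → DSField E L) := fun c =>
        Pi.single c 1 -
          Pi.single (Sum.elim (fun _ => (Sum.inl v0 : V ⊕ V)) (fun _ => Sum.inr v0) c) 1
        with hγ
      set T : Finset (V ⊕ V) := (S.erase v0).disjSum (S.erase v0) with hT
      set X := Submodule.span (DSField E L) (γ '' (T : Set (V ⊕ V))) with hX
      have hγmem : ∀ v ∈ S, γ (Sum.inl v) ∈ X ∧ γ (Sum.inr v) ∈ X := by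
        intro v hv
        by_cases hvv : v = v0
        · subst hvv
          constructor
          · have : γ (Sum.inl v) = 0 := by rw [hγ]; simp
            rw [this]; exact X.zero_mem
          · have : γ (Sum.inr v) = 0 := by rw [hγ]; simp
            rw [this]; exact X.zero_mem
        · constructor
          · apply Submodule.subset_span
            apply Set.mem_image_of_mem
            rw [hT, Finset.mem_coe, Finset.inl_mem_disjSum, Finset.mem_erase]
            exact ⟨hvv, hv⟩
          · apply Submodule.subset_span
            apply Set.mem_image_of_mem
            rw [hT, Finset.mem_coe, Finset.inr_mem_disjSum, Finset.mem_erase]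
            exact ⟨hvv, hv⟩
      have hrowmem : ∀ e : E, (G.ends e).1 ∈ S → (G.ends e).2 ∈ S →
          M202 G (Sum.inl e) ∈ X := by
        intro e h1 h2
        have hdecomp : M202 G (Sum.inl e) =
            dsVar E L (Sum.inl (Sum.inl e)) • γ (Sum.inl (G.ends e).1)
              - dsVar E L (Sum.inl (Sum.inl e)) • γ (Sum.inl (G.ends e).2)
              + (dsVar E L (Sum.inl (Sum.inr e)) • γ (Sum.inr (G.ends e).1)
              - dsVar E L (Sum.inl (Sum.inr e)) • γ (Sum.inr (G.ends e).2)) := by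
          rw [row_edge G e, hγ]
          simp only [smul_sub, Sum.elim_inl, Sum.elim_inr]
          abel
        rw [hdecomp]
        exact add_mem
          (sub_mem (X.smul_mem _ (hγmem _ h1).1) (X.smul_mem _ (hγmem _ h2).1))
          (sub_mem (X.smul_mem _ (hγmem _ h1).2) (X.smul_mem _ (hγmem _ h2).2))
      set t : Finset (E ⊕ L) := (Finset.univ.filter
        (fun e : E => (G.ends e).1 ∈ S ∧ (G.ends e).2 ∈ S)).disjSum ∅ with ht
      have hcardt : t.card = G.edgeCount S := by
        rw [ht, Finset.card_disjSum, edgeCount_eq]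
        simp
      have hindt : LinearIndependent (DSField E L) (fun r : ↥t => M202 G ↑r) :=
        hind.comp _ Subtype.coe_injective
      have hmemt : ∀ r ∈ t, M202 G r ∈ X := by
        intro r hr
        cases r with
        | inl e =>
          rw [ht, Finset.inl_mem_disjSum, Finset.mem_filter] at hr
          exact hrowmem e hr.2.1 hr.2.2
        | inr l =>
          rw [ht, Finset.inr_mem_disjSum] at hr
          exact absurd hr (Finset.notMem_empty l)
      have hle := card_le_finrank t (fun r => M202 G r) hindt X hmemt
      have hXle : Module.finrank (DSField E L) X ≤ T.card := by
        rw [hX]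
        exact finrank_span_image_le γ T
      have hTcard : T.card = 2 * (S.card - 1) := by
        rw [hT, Finset.card_disjSum, Finset.card_erase_of_mem hv0]
        omega
      have hS1 : 1 ≤ S.card := Finset.card_pos.mpr ⟨v0, hv0⟩
      omega
  · -- second count
    intro S
    set β : V ⊕ V → ((V ⊕ V) → DSField E L) := fun c => Pi.single c 1 with hβ
    set T : Finset (V ⊕ V) := S.disjSum S with hT
    set X := Submodule.span (DSField E L) (β '' (T : Set (V ⊕ V))) with hX
    have hβmem : ∀ v ∈ S, β (Sum.inl v) ∈ X ∧ β (Sum.inr v) ∈ X := by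
      intro v hv
      constructor
      · apply Submodule.subset_span
        apply Set.mem_image_of_mem
        rw [hT, Finset.mem_coe, Finset.inl_mem_disjSum]
        exact hv
      · apply Submodule.subset_span
        apply Set.mem_image_of_mem
        rw [hT, Finset.mem_coe, Finset.inr_mem_disjSum]
        exact hv
    set t : Finset (E ⊕ L) := (Finset.univ.filter
        (fun e : E => (G.ends e).1 ∈ S ∧ (G.ends e).2 ∈ S)).disjSum
      (Finset.univ.filter (fun l : L => G.loopAt l ∈ S)) with ht
    have hcardt : t.card = G.edgeCount S + G.loopCount S := by
      rw [ht, Finset.card_disjSum, edgeCount_eq, loopCount_eq]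
    have hindt : LinearIndependent (DSField E L) (fun r : ↥t => M202 G ↑r) :=
      hind.comp _ Subtype.coe_injective
    have hmemt : ∀ r ∈ t, M202 G r ∈ X := by
      intro r hr
      cases r with
      | inl e =>
        rw [ht, Finset.inl_mem_disjSum, Finset.mem_filter] at hr
        rw [show M202 G (Sum.inl e) =
            dsVar E L (Sum.inl (Sum.inl e)) • β (Sum.inl (G.ends e).1)
              - dsVar E L (Sum.inl (Sum.inl e)) • β (Sum.inl (G.ends e).2)
              + (dsVar E L (Sum.inl (Sum.inr e)) • β (Sum.inr (G.ends e).1)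
              - dsVar E L (Sum.inl (Sum.inr e)) • β (Sum.inr (G.ends e).2)) from
          row_edge G e]
        exact add_mem
          (sub_mem (X.smul_mem _ (hβmem _ hr.2.1).1) (X.smul_mem _ (hβmem _ hr.2.2).1))
          (sub_mem (X.smul_mem _ (hβmem _ hr.2.1).2) (X.smul_mem _ (hβmem _ hr.2.2).2))
      | inr l =>
        rw [ht, Finset.inr_mem_disjSum, Finset.mem_filter] at hr
        rw [show M202 G (Sum.inr l) =
            dsVar E L (Sum.inr (Sum.inl l)) • β (Sum.inl (G.loopAt l))
              + dsVar E L (Sum.inr (Sum.inr l)) • β (Sum.inr (G.loopAt l)) from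
          row_loop G l]
        exact add_mem (X.smul_mem _ (hβmem _ hr.2).1) (X.smul_mem _ (hβmem _ hr.2).2)
    have hle := card_le_finrank t (fun r => M202 G r) hindt X hmemt
    have hXle : Module.finrank (DSField E L) X ≤ T.card := by
      rw [hX]
      exact finrank_span_image_le β T
    have hTcard : T.card = 2 * S.card := by
      rw [hT, Finset.card_disjSum]
      omega
    omega

end Main

section MainB

open Submodule Module MvPolynomial

variable {V E L : Type} [Fintype V] [Fintype E] [Fintype L] [DecidableEq V]

/-- polynomial version of `M202` -/
noncomputable def Pm (G : LGraph V E L) :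
    Matrix (E ⊕ L) (V ⊕ V) (MvPolynomial ((E ⊕ E) ⊕ (L ⊕ L)) ℝ) := fun row col =>
  match row with
  | Sum.inl e =>
      match col with
      | Sum.inl v =>
          if v = (G.ends e).1 then X (Sum.inl (Sum.inl e))
          else if v = (G.ends e).2 then -X (Sum.inl (Sum.inl e)) else 0
      | Sum.inr v =>
          if v = (G.ends e).1 then X (Sum.inl (Sum.inr e))
          else if v = (G.ends e).2 then -X (Sum.inl (Sum.inr e)) else 0
  | Sum.inr l =>
      match col with
      | Sum.inl v => if v = G.loopAt l then X (Sum.inr (Sum.inl l)) else 0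
      | Sum.inr v => if v = G.loopAt l then X (Sum.inr (Sum.inr l)) else 0

theorem M202_eq_map (G : LGraph V E L) :
    M202 G = (Pm G).map
      (algebraMap (MvPolynomial ((E ⊕ E) ⊕ (L ⊕ L)) ℝ) (DSField E L)) := by
  funext r c
  cases r with
  | inl e =>
    cases c with
    | inl v =>
      simp only [M202, Pm, Matrix.map_apply]
      split_ifs <;> simp [dsVar, map_neg]
    | inr v =>
      simp only [M202, Pm, Matrix.map_apply]
      split_ifs <;> simp [dsVar, map_neg]
  | inr l =>
    cases c with
    | inl v =>
      simp only [M202, Pm, Matrix.map_apply]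
      split_ifs <;> simp [dsVar]
    | inr v =>
      simp only [M202, Pm, Matrix.map_apply]
      split_ifs <;> simp [dsVar]

theorem rank_of_sparse (G : LGraph V E L) (hsp : G.IsGradedSparse202) :
    (M202 G).rank = Fintype.card E + Fintype.card L := by
  classical
  have hcond : ∀ Y ⊆ (Finset.univ : Finset (E ⊕ L)),
      Y.card ≤ rk ℝ (uvec G) Y + rk ℝ (uvec G) Y := by
    intro Y _
    have := count_le G hsp Y
    omega
  obtain ⟨A, B, hABu, hABd, hA, hB⟩ :=
    unionLemma (F := ℝ) (Finset.univ : Finset (E ⊕ L)).card (V → ℝ) (V → ℝ)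
      (uvec G) (uvec G) Finset.univ rfl hcond
  -- the evaluation point
  set pt : ((E ⊕ E) ⊕ (L ⊕ L)) → ℝ :=
    Sum.elim
      (Sum.elim (fun e => if Sum.inl e ∈ A then 1 else 0)
        (fun e => if Sum.inl e ∈ B then 1 else 0))
      (Sum.elim (fun l => if Sum.inr l ∈ A then 1 else 0)
        (fun l => if Sum.inr l ∈ B then 1 else 0)) with hpt
  set N : Matrix (E ⊕ L) (V ⊕ V) ℝ := (Pm G).map (MvPolynomial.eval pt) with hN
  -- computing the entries of N
  have hN1 : ∀ (r : E ⊕ L) (v : V), N r (Sum.inl v) =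
      if r ∈ A then uvec G r v else 0 := by
    intro r v
    cases r with
    | inl e =>
      have hne := G.ne e
      rw [hN]
      simp only [Matrix.map_apply, Pm]
      by_cases hm : Sum.inl e ∈ A
      · rw [if_pos hm]
        split_ifs with h1 h2
        · subst h1
          simp [hpt, hm, uvec, Pi.single_apply, Pi.sub_apply, hne]
        · subst h2
          simp [hpt, hm, uvec, Pi.single_apply, Pi.sub_apply, Ne.symm hne, h1]
        · simp [uvec, Pi.single_apply, Pi.sub_apply, h1, h2]
      · rw [if_neg hm]
        split_ifs with h1 h2 <;> simp [hpt, hm]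
    | inr l =>
      rw [hN]
      simp only [Matrix.map_apply, Pm]
      by_cases hm : Sum.inr l ∈ A
      · rw [if_pos hm]
        split_ifs with h1
        · subst h1
          simp [hpt, hm, uvec, Pi.single_apply]
        · simp [uvec, Pi.single_apply, h1]
      · rw [if_neg hm]
        split_ifs with h1 <;> simp [hpt, hm]
  have hN2 : ∀ (r : E ⊕ L) (v : V), N r (Sum.inr v) =
      if r ∈ B then uvec G r v else 0 := by
    intro r v
    cases r with
    | inl e =>
      have hne := G.ne e
      rw [hN]
      simp only [Matrix.map_apply, Pm]
      by_cases hm : Sum.inl e ∈ B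
      · rw [if_pos hm]
        split_ifs with h1 h2
        · subst h1
          simp [hpt, hm, uvec, Pi.single_apply, Pi.sub_apply, hne]
        · subst h2
          simp [hpt, hm, uvec, Pi.single_apply, Pi.sub_apply, Ne.symm hne, h1]
        · simp [uvec, Pi.single_apply, Pi.sub_apply, h1, h2]
      · rw [if_neg hm]
        split_ifs with h1 h2 <;> simp [hpt, hm]
    | inr l =>
      rw [hN]
      simp only [Matrix.map_apply, Pm]
      by_cases hm : Sum.inr l ∈ B
      · rw [if_pos hm]
        split_ifs with h1
        · subst h1
          simp [hpt, hm, uvec, Pi.single_apply]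
        · simp [uvec, Pi.single_apply, h1]
      · rw [if_neg hm]
        split_ifs with h1 <;> simp [hpt, hm]
  -- rows of N are independent over ℝ
  have hNrows : LinearIndependent ℝ (fun r : E ⊕ L => N r) := by
    apply Fintype.linearIndependent_iff.mpr
    intro g hg r
    have hblockA : ∑ r ∈ A, g r • uvec G r = 0 := by
      funext v
      have h1 := congrFun hg (Sum.inl v)
      simp only [Finset.sum_apply, Pi.smul_apply, smul_eq_mul, Pi.zero_apply] at h1
      rw [Finset.sum_apply, Pi.zero_apply]
      have h2 : ∑ r : E ⊕ L, g r * N r (Sum.inl v)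
          = ∑ r : E ⊕ L, (if r ∈ A then g r * uvec G r v else 0) := by
        apply Finset.sum_congr rfl
        intro r _
        rw [hN1 r v, mul_ite, mul_zero]
      rw [h2, Finset.sum_ite_mem, Finset.univ_inter] at h1
      simpa using h1
    have hblockB : ∑ r ∈ B, g r • uvec G r = 0 := by
      funext v
      have h1 := congrFun hg (Sum.inr v)
      simp only [Finset.sum_apply, Pi.smul_apply, smul_eq_mul, Pi.zero_apply] at h1
      rw [Finset.sum_apply, Pi.zero_apply]
      have h2 : ∑ r : E ⊕ L, g r * N r (Sum.inr v)
          = ∑ r : E ⊕ L, (if r ∈ B then g r * uvec G r v else 0) := by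
        apply Finset.sum_congr rfl
        intro r _
        rw [hN2 r v, mul_ite, mul_zero]
      rw [h2, Finset.sum_ite_mem, Finset.univ_inter] at h1
      simpa using h1
    have hr : r ∈ A ∪ B := by rw [hABu]; exact Finset.mem_univ r
    rcases Finset.mem_union.mp hr with h | h
    · exact hA g hblockA r h
    · exact hB g hblockB r h
  obtain ⟨gcol, hdet⟩ := exists_det_submatrix N hNrows
  have hdetP : ((Pm G).submatrix id gcol).det ≠ 0 := by
    intro h0
    apply hdet
    rw [hN, Matrix.submatrix_map, ← RingHom.mapMatrix_apply, ← RingHom.map_det, h0, map_zero]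
  have hdetM : ((M202 G).submatrix id gcol).det ≠ 0 := by
    rw [M202_eq_map G, Matrix.submatrix_map, ← RingHom.mapMatrix_apply, ← RingHom.map_det]
    intro h0
    apply hdetP
    exact IsFractionRing.injective (MvPolynomial ((E ⊕ E) ⊕ (L ⊕ L)) ℝ) (DSField E L)
      (by rw [h0, map_zero])
  have hfinal := (rows_indep_of_det_submatrix (M202 G) gcol hdetM).rank_matrix
  rw [Fintype.card_sum] at hfinal; exact hfinal

end MainB

end M202Aux

/-- **`M_{2,0,2}` represents the `(2,0,2)`-graded-sparsity matroid.** -/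
theorem M202_rank_iff_gradedSparse202
    {V E L : Type} [Fintype V] [Fintype E] [Fintype L] [DecidableEq V]
    (G : LGraph V E L)
    (hmc : Fintype.card E + Fintype.card L ≤ 2 * Fintype.card V) :
    ((M202 G).rank = Fintype.card E + Fintype.card L ↔ G.IsGradedSparse202) ∧
    (Fintype.card E + Fintype.card L = 2 * Fintype.card V →
      ((M202 G).rank = 2 * Fintype.card V ↔ G.IsLooped22)) := by
  classical
  have hmain : (M202 G).rank = Fintype.card E + Fintype.card L ↔ G.IsGradedSparse202 := by
    constructor
    · intro h
      exact M202Aux.sparse_of_indep G (M202Aux.indep_of_rank G h)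
    · intro h
      exact M202Aux.rank_of_sparse G h
  refine ⟨hmain, fun hEq => ?_⟩
  rw [← hEq, hmain]
  unfold LGraph.IsLooped22
  constructor
  · intro h
    exact ⟨h, hEq⟩
  · rintro ⟨h, _⟩
    exact h
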